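/- For real s < 0 and ρ ∈ (0, ∞), the Stieltjes transform of the Marčenko–Pastur distribution satisfies m_ρ(s) = -(1/(2ρs)) * (s + ρ - 1 + sqrt((s + ρ - 1)² - 4ρs)). -/

import Mathlib

open MeasureTheory Real

open Set
open scoped ENNReal NNReal



lemma mp_key (m r t : ℝ) (hr : 0 < r) (ht : t < m - r) :
    ∫ x in (m-r)..(m+r), Real.sqrt ((m+r-x)*(x-(m-r))) / (x-t) =
      π * (m - t - Real.sqrt ((m-r-t)*(m+r-t))) := by
  set sN := Real.sqrt ((m-r-t)*(m+r-t)) with hsNdef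
  have hNpos : 0 < (m-r-t)*(m+r-t) := mul_pos (by linarith) (by linarith)
  have hsNpos : 0 < sN := Real.sqrt_pos.2 hNpos
  set F : ℝ → ℝ := fun x => Real.sqrt ((m+r-x)*(x-(m-r)))
      + (m-t) * Real.arcsin ((x-m)/r)
      - sN * Real.arcsin (((m-t)*(x-m)+r^2)/(r*(x-t))) with hFdef
  have hab : m - r ≤ m + r := by linarith
  -- continuity of F on Icc
  have hwcont : ContinuousOn (fun x => ((m-t)*(x-m)+r^2)/(r*(x-t))) (Icc (m-r) (m+r)) := by
    apply ContinuousOn.div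
    · fun_prop
    · fun_prop
    · intro x hx
      have hxt : (0:ℝ) < x - t := by have := hx.1; linarith
      exact (mul_pos hr hxt).ne'
  have hFcont : ContinuousOn F (Icc (m-r) (m+r)) := by
    apply ContinuousOn.sub
    · apply ContinuousOn.add
      · fun_prop
      · exact continuousOn_const.mul (Real.continuous_arcsin.comp_continuousOn (by fun_prop))
    · exact continuousOn_const.mul (Real.continuous_arcsin.comp_continuousOn hwcont)
  -- derivative on Ioo
  have hderiv : ∀ x ∈ Ioo (m-r) (m+r),
      HasDerivAt F (Real.sqrt ((m+r-x)*(x-(m-r))) / (x-t)) x := by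
    intro x hx
    obtain ⟨hx1, hx2⟩ := hx
    have hxt : 0 < x - t := by linarith
    have hQpos : 0 < (m+r-x)*(x-(m-r)) := mul_pos (by linarith) (by linarith)
    set Q := (m+r-x)*(x-(m-r)) with hQdef
    have hsQpos : 0 < Real.sqrt Q := Real.sqrt_pos.2 hQpos
    -- sqrt part
    have d1 : HasDerivAt (fun y => (m+r-y)*(y-(m-r))) (2*(m-x)) x := by
      have : HasDerivAt (fun y => (m+r-y)*(y-(m-r))) (-1 * (x - (m-r)) + (m+r-x)*1) x := (((hasDerivAt_id x).const_sub (m+r)).mul ((hasDerivAt_id x).sub_const (m-r)))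
      convert this using 1
      ring
    have dsqrt : HasDerivAt (fun y => Real.sqrt ((m+r-y)*(y-(m-r))))
        (2*(m-x) / (2*Real.sqrt Q)) x := d1.sqrt hQpos.ne'
    -- first arcsin
    have du : HasDerivAt (fun y => (y-m)/r) (1/r) x := by
      simpa using ((hasDerivAt_id x).sub_const m).div_const r
    have hu1 : (x-m)/r < 1 := (div_lt_one hr).2 (by linarith)
    have hu2 : (-1:ℝ) < (x-m)/r := by rw [lt_div_iff₀ hr]; linarith
    have darc1 : HasDerivAt (fun y => Real.arcsin ((y-m)/r))
        (1/Real.sqrt (1 - ((x-m)/r)^2) * (1/r)) x :=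
      HasDerivAt.comp x (Real.hasDerivAt_arcsin hu2.ne' hu1.ne) du
    -- second arcsin
    have dnum : HasDerivAt (fun y => (m-t)*(y-m)+r^2) (m-t) x := by
      simpa using (((hasDerivAt_id x).sub_const m).const_mul (m-t)).add_const (r^2)
    have dden : HasDerivAt (fun y => r*(y-t)) r x := by
      simpa using ((hasDerivAt_id x).sub_const t).const_mul r
    have hden : r*(x-t) ≠ 0 := by positivity
    have dw : HasDerivAt (fun y => ((m-t)*(y-m)+r^2)/(r*(y-t)))
        (((m-t) * (r*(x-t)) - ((m-t)*(x-m)+r^2) * r) / (r*(x-t))^2) x := dnum.div dden hden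
    set w := ((m-t)*(x-m)+r^2)/(r*(x-t)) with hwdef
    have hw2 : 1 - w^2 = ((m-r-t)*(m+r-t)) * Q / (r*(x-t))^2 := by
      rw [hwdef, hQdef]
      field_simp
      ring
    have hwlt : w^2 < 1 := by
      have hpos : 0 < 1 - w^2 := by
        rw [hw2]; exact div_pos (mul_pos hNpos hQpos) (pow_pos (mul_pos hr hxt) 2)
      linarith
    have hwne1 : w ≠ 1 := fun h => by rw [h] at hwlt; norm_num at hwlt
    have hwne1' : w ≠ -1 := fun h => by rw [h] at hwlt; norm_num at hwlt
    have darc2 : HasDerivAt (fun y => Real.arcsin (((m-t)*(y-m)+r^2)/(r*(y-t))))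
        (1/Real.sqrt (1 - w^2) *
          (((m-t) * (r*(x-t)) - ((m-t)*(x-m)+r^2) * r) / (r*(x-t))^2)) x :=
      HasDerivAt.comp x (Real.hasDerivAt_arcsin hwne1' hwne1) dw
    have dF : HasDerivAt F
        (2*(m-x) / (2*Real.sqrt Q) + (m-t) * (1/Real.sqrt (1 - ((x-m)/r)^2) * (1/r))
          - sN * (1/Real.sqrt (1 - w^2) *
            (((m-t) * (r*(x-t)) - ((m-t)*(x-m)+r^2) * r) / (r*(x-t))^2))) x :=
      (dsqrt.add (darc1.const_mul (m-t))).sub (darc2.const_mul sN)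
    -- simplify sqrt expressions
    have s1 : Real.sqrt (1 - ((x-m)/r)^2) = Real.sqrt Q / r := by
      rw [show 1 - ((x-m)/r)^2 = Q/r^2 by rw [hQdef]; field_simp; ring,
        Real.sqrt_div hQpos.le, Real.sqrt_sq hr.le]
    have s2 : Real.sqrt (1 - w^2) = sN * Real.sqrt Q / (r*(x-t)) := by
      rw [hw2, Real.sqrt_div (by positivity), Real.sqrt_sq (by positivity),
        Real.sqrt_mul hNpos.le, hsNdef]
    have hQQ : Real.sqrt Q * Real.sqrt Q = Q := Real.mul_self_sqrt hQpos.le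
    have hNN : sN * sN = (m-r-t)*(m+r-t) := Real.mul_self_sqrt hNpos.le
    have heq : 2*(m-x) / (2*Real.sqrt Q) + (m-t) * (1/Real.sqrt (1 - ((x-m)/r)^2) * (1/r))
          - sN * (1/Real.sqrt (1 - w^2) *
            (((m-t) * (r*(x-t)) - ((m-t)*(x-m)+r^2) * r) / (r*(x-t))^2))
        = Real.sqrt Q / (x-t) := by
      rw [s1, s2]
      rw [show ((m-t) * (r*(x-t)) - ((m-t)*(x-m)+r^2) * r) = r * ((m-r-t)*(m+r-t)) by ring]
      field_simp
      have hQQ' : Real.sqrt Q * Real.sqrt Q = (m+r-x)*(x-(m-r)) := by rw [hQQ, hQdef]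
      linear_combination (-1:ℝ) * hQQ'
    rw [← heq]
    exact dF
  have hgint : IntervalIntegrable (fun x => Real.sqrt ((m+r-x)*(x-(m-r))) / (x-t))
      volume (m-r) (m+r) := by
    apply ContinuousOn.intervalIntegrable
    rw [uIcc_of_le hab]
    apply ContinuousOn.div
    · fun_prop
    · fun_prop
    · intro x hx
      have : t < x := lt_of_lt_of_le ht hx.1
      exact sub_ne_zero.2 (ne_of_gt this)
  rw [intervalIntegral.integral_eq_sub_of_hasDeriv_right_of_le hab hFcont
    (fun x hx => (hderiv x hx).hasDerivWithinAt) hgint]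
  have e1 : F (m+r) = (m-t) * (π/2) - sN * (π/2) := by
    rw [hFdef]
    simp only
    rw [show m+r-(m+r) = 0 by ring, zero_mul, Real.sqrt_zero,
      show (m+r-m)/r = 1 by field_simp; ring,
      show ((m-t)*(m+r-m)+r^2)/(r*(m+r-t)) = 1 by
        rw [div_eq_one_iff_eq (mul_pos hr (by linarith : (0:ℝ) < m+r-t)).ne']; ring,
      Real.arcsin_one]
    ring
  have e2 : F (m-r) = (m-t) * (-(π/2)) - sN * (-(π/2)) := by
    rw [hFdef]
    simp only
    rw [show (m+r-(m-r))*((m-r)-(m-r)) = 0 by ring, Real.sqrt_zero,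
      show (m-r-m)/r = -1 by field_simp; ring,
      show ((m-t)*(m-r-m)+r^2)/(r*(m-r-t)) = -1 by
        rw [div_eq_iff (mul_pos hr (by linarith : (0:ℝ) < m-r-t)).ne']; ring,
      Real.arcsin_neg_one]
    ring
  rw [e1, e2]
  ring


lemma mp_key0 : ∫ x in (0:ℝ)..4, Real.sqrt ((4-x)*x) / x = 2*π := by
  have h40 : (0:ℝ) ≤ 4 := by norm_num
  have hgint : IntervalIntegrable (fun x => Real.sqrt ((4-x)*x) / x) volume 0 4 := by
    rw [intervalIntegrable_iff_integrableOn_Ioo_of_le h40]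
    have hbd : IntegrableOn (fun x : ℝ => 2 * x ^ (-(1/2) : ℝ)) (Ioo (0:ℝ) 4) := by
      have := (intervalIntegral.intervalIntegrable_rpow' (a := 0) (b := 4)
        (r := -(1/2)) (by norm_num)).const_mul 2
      rwa [intervalIntegrable_iff_integrableOn_Ioo_of_le h40] at this
    apply Integrable.mono' hbd
    · exact ((ContinuousOn.div (by fun_prop) continuousOn_id
        (fun x hx => ne_of_gt hx.1)).aestronglyMeasurable measurableSet_Ioo)
    · rw [ae_restrict_iff' measurableSet_Ioo]
      filter_upwards with x hx
      obtain ⟨hx0, hx4⟩ := hx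
      have hsx : 0 < Real.sqrt x := Real.sqrt_pos.2 hx0
      rw [Real.norm_of_nonneg (by positivity), Real.rpow_neg hx0.le, ← Real.sqrt_eq_rpow]
      have key : Real.sqrt ((4-x)*x) ≤ 2 * Real.sqrt x := by
        rw [Real.sqrt_mul (by linarith : (0:ℝ) ≤ 4 - x)]
        have h2 : Real.sqrt (4-x) ≤ 2 := by
          rw [show (2:ℝ) = Real.sqrt 4 by
            rw [show (4:ℝ) = 2^2 by norm_num, Real.sqrt_sq]; norm_num]
          exact Real.sqrt_le_sqrt (by linarith)
        nlinarith [Real.sqrt_nonneg x]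
      calc Real.sqrt ((4-x)*x) / x ≤ (2 * Real.sqrt x) / x := by gcongr
        _ = 2 * (Real.sqrt x)⁻¹ := by
            field_simp
            rw [Real.sq_sqrt hx0.le]
  set F : ℝ → ℝ := fun x => Real.sqrt ((4-x)*x) + 2 * Real.arcsin ((x-2)/2) with hFdef
  have hFcont : ContinuousOn F (Icc 0 4) := by
    apply ContinuousOn.add
    · fun_prop
    · exact continuousOn_const.mul (Real.continuous_arcsin.comp_continuousOn (by fun_prop))
  have hderiv : ∀ x ∈ Ioo (0:ℝ) 4, HasDerivAt F (Real.sqrt ((4-x)*x) / x) x := by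
    intro x hx
    obtain ⟨hx0, hx4⟩ := hx
    have hQpos : 0 < (4-x)*x := mul_pos (by linarith) hx0
    set Q := (4-x)*x with hQdef
    have hsQpos : 0 < Real.sqrt Q := Real.sqrt_pos.2 hQpos
    have d1 : HasDerivAt (fun y => (4-y)*y) (4-2*x) x := by
      have : HasDerivAt (fun y => (4-y)*y) (-1 * x + (4-x)*1) x := ((hasDerivAt_id x).const_sub 4).mul (hasDerivAt_id x)
      convert this using 1
      ring
    have dsqrt : HasDerivAt (fun y => Real.sqrt ((4-y)*y)) ((4-2*x) / (2*Real.sqrt Q)) x :=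
      d1.sqrt hQpos.ne'
    have du : HasDerivAt (fun y => (y-2)/2) (1/2) x := by
      simpa using ((hasDerivAt_id x).sub_const 2).div_const 2
    have hu1 : (x-2)/2 < 1 := by linarith [(div_lt_one (by norm_num : (0:ℝ) < 2)).2 (by linarith : x - 2 < 2)]
    have hu2 : (-1:ℝ) < (x-2)/2 := by rw [lt_div_iff₀ (by norm_num : (0:ℝ) < 2)]; linarith
    have darc1 : HasDerivAt (fun y => Real.arcsin ((y-2)/2))
        (1/Real.sqrt (1 - ((x-2)/2)^2) * (1/2)) x :=
      HasDerivAt.comp x (Real.hasDerivAt_arcsin hu2.ne' hu1.ne) du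
    have dF : HasDerivAt F ((4-2*x) / (2*Real.sqrt Q)
        + 2 * (1/Real.sqrt (1 - ((x-2)/2)^2) * (1/2))) x :=
      dsqrt.add (darc1.const_mul 2)
    have s1 : Real.sqrt (1 - ((x-2)/2)^2) = Real.sqrt Q / 2 := by
      rw [show 1 - ((x-2)/2)^2 = Q/2^2 by rw [hQdef]; field_simp; ring,
        Real.sqrt_div hQpos.le, Real.sqrt_sq (by norm_num : (0:ℝ) ≤ 2)]
    have hQQ : Real.sqrt Q * Real.sqrt Q = Q := Real.mul_self_sqrt hQpos.le
    have heq : (4-2*x) / (2*Real.sqrt Q) + 2 * (1/Real.sqrt (1 - ((x-2)/2)^2) * (1/2))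
        = Real.sqrt Q / x := by
      rw [s1]
      have hQQ' : Real.sqrt Q * Real.sqrt Q = (4-x)*x := by rw [hQQ, hQdef]
      field_simp
      linear_combination (-2:ℝ) * hQQ'
    rw [← heq]
    exact dF
  rw [intervalIntegral.integral_eq_sub_of_hasDeriv_right_of_le h40 hFcont
    (fun x hx => (hderiv x hx).hasDerivWithinAt) hgint]
  rw [hFdef]
  simp only
  rw [show ((4:ℝ)-4)*4 = 0 by ring, show ((4:ℝ)-0)*0 = 0 by ring, Real.sqrt_zero,
    show ((4:ℝ)-2)/2 = 1 by norm_num, show ((0:ℝ)-2)/2 = -1 by norm_num,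
    Real.arcsin_one, Real.arcsin_neg_one]
  ring

/-- The Marčenko–Pastur distribution with parameter `ρ ∈ (0, ∞)`: a point mass
`max (1 - ρ⁻¹) 0` at `0` plus the absolutely continuous part with density
`(1/(2πρz)) √((b - z)(z - a))` on `(a, b)`, where `a = (1 - √ρ)²`, `b = (1 + √ρ)²`. -/
noncomputable def mpMeasure (ρ : ℝ) : Measure ℝ :=
  ENNReal.ofReal (max (1 - ρ⁻¹) 0) • Measure.dirac (0 : ℝ) +
    volume.withDensity (fun z =>
      ENNReal.ofReal
        (if (1 - Real.sqrt ρ) ^ 2 < z ∧ z < (1 + Real.sqrt ρ) ^ 2 then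
          Real.sqrt (((1 + Real.sqrt ρ) ^ 2 - z) * (z - (1 - Real.sqrt ρ) ^ 2)) /
            (2 * Real.pi * ρ * z)
        else 0))

theorem stmt_2 (ρ s : ℝ) (hρ : 0 < ρ) (hs : s < 0) :
    ∫ z, (z - s)⁻¹ ∂(mpMeasure ρ) =
      -(1 / (2 * ρ * s)) * (s + ρ - 1 + Real.sqrt ((s + ρ - 1) ^ 2 - 4 * ρ * s)) := by
  have hq0 : 0 < Real.sqrt ρ := Real.sqrt_pos.2 hρ
  have hq2 : Real.sqrt ρ ^ 2 = ρ := Real.sq_sqrt hρ.le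
  set q := Real.sqrt ρ with hqdef
  set m : ℝ := 1 + ρ with hmdef
  set r : ℝ := 2 * q with hrdef
  have hr : 0 < r := by positivity
  have ha' : (1 - q)^2 = m - r := by rw [hmdef, hrdef]; linear_combination hq2
  have hb' : (1 + q)^2 = m + r := by rw [hmdef, hrdef]; linear_combination hq2
  have ha0 : 0 ≤ m - r := by rw [← ha']; positivity
  have hsa : s < m - r := lt_of_lt_of_le hs ha0
  have hmr : m - r ≤ m + r := by linarith
  set d : ℝ → ℝ := fun z =>
    if m - r < z ∧ z < m + r then
      Real.sqrt ((m + r - z) * (z - (m - r))) / (2 * π * ρ * z) else 0 with hddef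
  have hdnonneg : ∀ z, 0 ≤ d z := by
    intro z
    rw [hddef]
    dsimp only
    split_ifs with h
    · have hz : 0 < z := lt_of_le_of_lt ha0 h.1
      positivity
    · exact le_rfl
  have hdmeas : Measurable d := by
    rw [hddef]
    exact Measurable.ite (measurableSet_Ioo (a := m - r) (b := m + r)) (by fun_prop) measurable_const
  have hmp : mpMeasure ρ = ENNReal.ofReal (max (1 - ρ⁻¹) 0) • Measure.dirac (0 : ℝ) +
      volume.withDensity (fun z => ENNReal.ofReal (d z)) := by
    rw [mpMeasure, ← hqdef, ha', hb', hddef]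
  -- integrand pieces
  set gs : ℝ → ℝ := fun z => Real.sqrt ((m + r - z) * (z - (m - r))) / (z - s) with hgsdef
  set g0 : ℝ → ℝ := fun z => Real.sqrt ((m + r - z) * (z - (m - r))) / z with hg0def
  set g₂ : ℝ → ℝ := fun z =>
    Real.sqrt ((m + r - z) * (z - (m - r))) / (2 * π * ρ * z) * (z - s)⁻¹ with hg₂def
  -- integrability of gs (continuous on Icc)
  have hIs : IntegrableOn gs (Ioo (m - r) (m + r)) := by
    apply IntegrableOn.mono_set _ Ioo_subset_Icc_self
    apply ContinuousOn.integrableOn_Icc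
    apply ContinuousOn.div (by fun_prop) (by fun_prop)
    intro z hz
    have : s < z := lt_of_lt_of_le hsa hz.1
    exact sub_ne_zero.2 (ne_of_gt this)
  -- integrability of g0 via comparison
  have hI0 : IntegrableOn g0 (Ioo (m - r) (m + r)) := by
    have hbd : IntegrableOn
        (fun z : ℝ => Real.sqrt (m + r - (m - r)) * (z - (m - r)) ^ (-(1/2) : ℝ))
        (Ioo (m - r) (m + r)) := by
      have h1 : IntervalIntegrable (fun x : ℝ => x ^ (-(1/2) : ℝ)) volume 0 (m + r - (m - r)) :=
        intervalIntegral.intervalIntegrable_rpow' (by norm_num)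
      have h2 := (h1.comp_sub_right (m - r)).const_mul (Real.sqrt (m + r - (m - r)))
      simp only [zero_add, show m + r - (m - r) + (m - r) = m + r from by ring] at h2
      rwa [intervalIntegrable_iff_integrableOn_Ioo_of_le hmr] at h2
    apply Integrable.mono' hbd
    · apply ContinuousOn.aestronglyMeasurable _ measurableSet_Ioo
      apply ContinuousOn.div (by fun_prop) (by fun_prop)
      intro z hz
      exact ne_of_gt (lt_of_le_of_lt ha0 hz.1)
    · rw [ae_restrict_iff' measurableSet_Ioo]
      filter_upwards with z hz
      obtain ⟨hz1, hz2⟩ := hz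
      have hz0 : 0 < z := lt_of_le_of_lt ha0 hz1
      have hu : 0 < z - (m - r) := by linarith
      have hsu : 0 < Real.sqrt (z - (m - r)) := Real.sqrt_pos.2 hu
      rw [hg0def]
      rw [Real.norm_of_nonneg (by positivity), Real.rpow_neg hu.le, ← Real.sqrt_eq_rpow]
      have key : Real.sqrt ((m + r - z) * (z - (m - r)))
          ≤ Real.sqrt (m + r - (m - r)) * Real.sqrt (z - (m - r)) := by
        rw [Real.sqrt_mul (by linarith : (0:ℝ) ≤ m + r - z)]
        have h2 : Real.sqrt (m + r - z) ≤ Real.sqrt (m + r - (m - r)) :=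
          Real.sqrt_le_sqrt (by linarith)
        nlinarith [Real.sqrt_nonneg (z - (m - r))]
      calc Real.sqrt ((m + r - z) * (z - (m - r))) / z
          ≤ (Real.sqrt (m + r - (m - r)) * Real.sqrt (z - (m - r))) / (z - (m - r)) := by
            apply div_le_div₀ (by positivity) key hu (by linarith)
        _ = Real.sqrt (m + r - (m - r)) * (Real.sqrt (z - (m - r)))⁻¹ := by
            field_simp
            rw [Real.sq_sqrt hu.le]
  -- pointwise identity on Ioo
  have hptwise : ∀ z ∈ Ioo (m - r) (m + r),
      g₂ z = (1 / (2 * π * ρ * s)) * (gs z - g0 z) := by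
    intro z hz
    have hz0 : 0 < z := lt_of_le_of_lt ha0 hz.1
    have hzs : (0:ℝ) < z - s := by linarith
    rw [hg₂def, hgsdef, hg0def]
    dsimp only
    have h1 : z ≠ 0 := hz0.ne'
    have h2 : z - s ≠ 0 := hzs.ne'
    have hπ : π ≠ 0 := Real.pi_ne_zero
    rw [div_sub_div _ _ h2 h1, show Real.sqrt ((m + r - z) * (z - (m - r))) * z
      - (z - s) * Real.sqrt ((m + r - z) * (z - (m - r)))
      = s * Real.sqrt ((m + r - z) * (z - (m - r))) from by ring]
    have e : Real.sqrt ((m + r - z) * (z - (m - r))) / (2*π*ρ*z) * (z - s)⁻¹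
        = Real.sqrt ((m + r - z) * (z - (m - r))) / (2*π*ρ*z*(z - s)) := by
      rw [← div_eq_mul_inv, div_div]
    have e2 : (1:ℝ)/(2*π*ρ*s) * (s * Real.sqrt ((m + r - z) * (z - (m - r))) / ((z - s)*z))
        = s * Real.sqrt ((m + r - z) * (z - (m - r))) / (2*π*ρ*s*((z - s)*z)) := by
      rw [div_mul_div_comm, one_mul]
    rw [e, e2, div_eq_div_iff (by positivity)
      (mul_ne_zero (mul_ne_zero (by positivity : (2*π*ρ:ℝ) ≠ 0) (ne_of_lt hs))
        (mul_ne_zero h2 h1))]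
    ring
  have hae : g₂ =ᵐ[volume.restrict (Ioo (m - r) (m + r))]
      fun z => (1 / (2 * π * ρ * s)) * (gs z - g0 z) := by
    rw [Filter.EventuallyEq, ae_restrict_iff' measurableSet_Ioo]
    filter_upwards with z hz
    exact hptwise z hz
  have hIg₂ : IntegrableOn g₂ (Ioo (m - r) (m + r)) :=
    (((hIs.sub hI0).const_mul (1 / (2 * π * ρ * s))).congr hae.symm)
  -- the dirac part
  have hint1 : Integrable (fun z : ℝ => (z - s)⁻¹)
      (ENNReal.ofReal (max (1 - ρ⁻¹) 0) • Measure.dirac (0 : ℝ)) := by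
    apply Integrable.smul_measure _ ENNReal.ofReal_ne_top
    exact (integrable_const ((0:ℝ) - s)⁻¹).congr (ae_eq_dirac (fun z : ℝ => (z - s)⁻¹)).symm
  -- the density part as indicator
  have hfun : (fun z => (d z).toNNReal • (z - s)⁻¹) = (Ioo (m - r) (m + r)).indicator g₂ := by
    funext z
    rw [NNReal.smul_def, Real.coe_toNNReal _ (hdnonneg z), hddef]
    by_cases hz : z ∈ Ioo (m - r) (m + r)
    · rw [indicator_of_mem hz, hg₂def]
      dsimp only
      rw [if_pos ⟨hz.1, hz.2⟩, smul_eq_mul]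
    · rw [indicator_of_notMem hz]
      dsimp only
      rw [if_neg (by simpa [mem_Ioo] using hz)]
      simp
  have hint2 : Integrable (fun z : ℝ => (z - s)⁻¹)
      (volume.withDensity fun z => ENNReal.ofReal (d z)) := by
    rw [show (fun z => ENNReal.ofReal (d z))
      = (fun z => ((fun z => (d z).toNNReal) z : ℝ≥0∞)) from rfl]
    rw [integrable_withDensity_iff_integrable_smul hdmeas.real_toNNReal]
    rw [hfun]
    exact (integrable_indicator_iff measurableSet_Ioo).2 hIg₂
  -- main computation
  rw [hmp, integral_add_measure hint1 hint2]
  have hterm1 : (∫ z, (z - s)⁻¹ ∂(ENNReal.ofReal (max (1 - ρ⁻¹) 0) • Measure.dirac (0 : ℝ)))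
      = max (1 - ρ⁻¹) 0 * (0 - s)⁻¹ := by
    rw [integral_smul_measure, integral_dirac, ENNReal.toReal_ofReal (le_max_right _ _)]
    rfl
  have hterm2 : (∫ z, (z - s)⁻¹ ∂(volume.withDensity fun z => ENNReal.ofReal (d z)))
      = (1 / (2 * π * ρ * s)) *
        ((∫ z in (m - r)..(m + r), gs z) - ∫ z in (m - r)..(m + r), g0 z) := by
    rw [show (fun z => ENNReal.ofReal (d z))
      = (fun z => ((fun z => (d z).toNNReal) z : ℝ≥0∞)) from rfl]
    rw [integral_withDensity_eq_integral_smul hdmeas.real_toNNReal]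
    rw [hfun, integral_indicator measurableSet_Ioo]
    rw [integral_congr_ae hae, integral_const_mul, integral_sub hIs hI0]
    simp only [intervalIntegral.integral_of_le hmr, integral_Ioc_eq_integral_Ioo]
  rw [hterm1, hterm2]
  -- evaluate the two interval integrals
  have hKs : (∫ z in (m - r)..(m + r), gs z)
      = π * (m - s - Real.sqrt ((s + ρ - 1)^2 - 4 * ρ * s)) := by
    rw [hgsdef]
    rw [mp_key m r s hr hsa]
    congr 2
    congr 1
    linear_combination (-4 : ℝ) * hq2
  have hK0 : (∫ z in (m - r)..(m + r), g0 z) = π * (m - |1 - ρ|) := by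
    rw [hg0def]
    by_cases hρ1 : ρ = 1
    · subst hρ1
      have hq1 : q = 1 := by rw [hqdef, Real.sqrt_one]
      have h0 : m - r = 0 := by rw [hmdef, hrdef, hq1]; norm_num
      have h4 : m + r = 4 := by rw [hmdef, hrdef, hq1]; norm_num
      rw [h0, h4]
      simp only [sub_zero]
      rw [mp_key0, show |1 - (1:ℝ)| = 0 by norm_num, hmdef]
      ring
    · have hq1 : q ≠ 1 := fun h => hρ1 (by rw [← hq2, h]; norm_num)
      have h0a : 0 < m - r := by
        rw [← ha']
        have h1q : (1 : ℝ) - q ≠ 0 := sub_ne_zero.2 (Ne.symm hq1)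
        positivity
      have h := mp_key m r 0 hr h0a
      simp only [sub_zero] at h
      rw [h]
      congr 2
      rw [show (m - r) * (m + r) = (1 - ρ)^2 by
        rw [hmdef, hrdef]; linear_combination (-4 : ℝ) * hq2]
      exact Real.sqrt_sq_eq_abs _
  rw [hKs, hK0]
  have hsne : s ≠ 0 := hs.ne
  have hρne : ρ ≠ 0 := hρ.ne'
  have hπ : π ≠ 0 := Real.pi_ne_zero
  rcases le_or_gt ρ 1 with hle | hgt
  · have hmax : max (1 - ρ⁻¹) 0 = 0 := max_eq_right (by
      have : (1:ℝ) ≤ ρ⁻¹ := (one_le_inv₀ hρ).2 hle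
      linarith)
    have habs : |1 - ρ| = 1 - ρ := abs_of_nonneg (by linarith)
    rw [hmax, habs, hmdef]
    field_simp
    ring
  · have hmax : max (1 - ρ⁻¹) 0 = 1 - ρ⁻¹ := max_eq_left (by
      have : ρ⁻¹ < 1 := by rw [inv_lt_one_iff₀]; right; exact hgt
      linarith)
    have habs : |1 - ρ| = ρ - 1 := by rw [abs_of_neg (by linarith : 1 - ρ < 0)]; ring
    rw [hmax, habs, hmdef]
    field_simp
    ring
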